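/- Exact cancellation (Lemma SETZ-FD2, first case): if x and y are nonzero precision-p binary floating-point numbers with opposite signs, equal exponents e_x = e_y, and equal trailing exponents f_x = f_y, then either x + y = 0, or x + y is exactly representable with exponent e_s satisfying f_x + 1 ≤ e_s ≤ e_x - 1 and trailing exponent f_s satisfying f_x + 1 ≤ f_s ≤ e_s; in all cases TwoSum(x, y) = (x + y, 0), i.e., the rounding error is zero. -/

import Mathlib

/-- t is representable in precision-p binary floating-point arithmetic. -/
def FpRep (p : ℕ) (t : ℝ) : Prop :=
  ∃ (m g : ℤ), |m| < (2 : ℤ) ^ p ∧ t = (m : ℝ) * (2 : ℝ) ^ g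

/-- R rounds to a nearest precision-p floating-point number. -/
def IsRNE (p : ℕ) (R : ℝ → ℝ) : Prop :=
  ∀ t : ℝ, FpRep p (R t) ∧ ∀ z : ℝ, FpRep p z → |t - R t| ≤ |t - z|

/-- x is a nonzero precision-p binary float with exponent e and trailing
exponent f. -/
def FpTrail (p : ℕ) (e f : ℤ) (x : ℝ) : Prop :=
  ∃ M : ℤ, Odd M ∧ x = (M : ℝ) * (2 : ℝ) ^ f ∧
    (2 : ℝ) ^ e ≤ |x| ∧ |x| < (2 : ℝ) ^ (e + 1) ∧ e - f ≤ (p : ℤ) - 1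

lemma odd_decomp (m : ℤ) (hm : m ≠ 0) :
    ∃ (N : ℤ) (k : ℕ), Odd N ∧ m = N * 2 ^ k := by
  obtain ⟨k, n, hnd, hn⟩ :=
    Nat.exists_eq_pow_mul_and_not_dvd (Int.natAbs_ne_zero.mpr hm) 2 (by norm_num)
  have hodd : Odd n := Nat.odd_iff.mpr (Nat.two_dvd_ne_zero.mp hnd)
  refine ⟨m.sign * n, k, ?_, ?_⟩
  · rw [← Int.natAbs_odd]
    have h : (m.sign * (n:ℤ)).natAbs = n := by
      rw [Int.natAbs_mul, Int.natAbs_sign_of_ne_zero hm, one_mul, Int.natAbs_natCast]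
    rw [h]; exact hodd
  · have h2 : (m.natAbs : ℤ) = 2 ^ k * n := by exact_mod_cast congrArg (Nat.cast : ℕ → ℤ) hn
    conv_lhs => rw [← Int.sign_mul_natAbs m, h2]
    ring

/-- Exact cancellation (Lemma SETZ-FD2 core): opposite signs, equal exponents,
equal trailing exponents ⟹ x + y = 0, or x + y is exactly representable with
exponent in [f_x + 1, e_x - 1] and trailing exponent in [f_x + 1, e_s];
in all cases TwoSum(x, y) = (x + y, 0). -/
theorem exact_cancellation (p : ℕ) (hp : 1 ≤ p) (R : ℝ → ℝ) (hR : IsRNE p R)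
    (x y : ℝ) (ex fx : ℤ)
    (hx : FpTrail p ex fx x) (hy : FpTrail p ex fx y)
    (hsign : x * y < 0) :
    (x + y = 0 ∨
      ∃ (N es fs : ℤ), Odd N ∧ x + y = (N : ℝ) * (2 : ℝ) ^ fs ∧
        (2 : ℝ) ^ es ≤ |x + y| ∧ |x + y| < (2 : ℝ) ^ (es + 1) ∧
        fx + 1 ≤ es ∧ es ≤ ex - 1 ∧ fx + 1 ≤ fs ∧ fs ≤ es) ∧
      R (x + y) = x + y ∧ (x + y) - R (x + y) = 0 := by
  obtain ⟨M, hMo, hxeq, hxlo, hxhi, hxp⟩ := hx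
  obtain ⟨M', hM'o, hyeq, hylo, hyhi, _⟩ := hy
  set s := x + y with hs
  have hseq : s = ((M + M' : ℤ) : ℝ) * (2:ℝ)^fx := by
    rw [hs, hxeq, hyeq]; push_cast; ring
  have h2ex : (2:ℝ)^(ex+1) = 2 * (2:ℝ)^ex := by
    rw [zpow_add_one₀ (by norm_num : (2:ℝ) ≠ 0)]; ring
  have hxyabs : |s| < (2:ℝ)^ex := by
    rcases mul_neg_iff.mp hsign with ⟨hx0, hy0⟩ | ⟨hx0, hy0⟩
    · rw [abs_of_pos hx0] at hxlo hxhi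
      rw [abs_of_neg hy0] at hylo hyhi
      rw [abs_lt]; constructor <;> simp only [hs] <;> linarith
    · rw [abs_of_neg hx0] at hxlo hxhi
      rw [abs_of_pos hy0] at hylo hyhi
      rw [abs_lt]; constructor <;> simp only [hs] <;> linarith
  -- helper to conclude R s = s once we know FpRep p s
  have hRs : FpRep p s → R s = s ∧ s - R s = 0 := by
    intro hrep
    have h := (hR s).2 s hrep
    simp only [sub_self, abs_zero] at h
    have h0 : s - R s = 0 := abs_eq_zero.mp (le_antisymm h (abs_nonneg _))
    constructor <;> linarith
  by_cases hs0 : s = 0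
  · have hrep : FpRep p s := ⟨0, 0, by positivity, by simp [hs0]⟩
    exact ⟨Or.inl hs0, hRs hrep⟩
  · have hMM : M + M' ≠ 0 := by
      intro h; apply hs0; rw [hseq, h]; simp
    obtain ⟨N, k, hNo, hNk⟩ := odd_decomp (M + M') hMM
    have hk1 : 1 ≤ k := by
      by_contra h
      have hk0 : k = 0 := by omega
      have : Even (M + M') := Odd.add_odd hMo hM'o
      rw [hNk, hk0, pow_zero, mul_one] at this
      exact (Int.not_odd_iff_even.mpr this) hNo
    set fs : ℤ := fx + k with hfs
    have hsN : s = (N : ℝ) * (2:ℝ)^fs := by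
      rw [hseq, hfs]
      have : ((M + M' : ℤ) : ℝ) = (N : ℝ) * 2 ^ k := by exact_mod_cast congrArg (Int.cast : ℤ → ℝ) hNk
      rw [this, zpow_add₀ (by norm_num : (2:ℝ) ≠ 0), zpow_natCast]
      ring
    have hN0 : N ≠ 0 := by rintro rfl; simp at hNo
    have hN1 : (1:ℝ) ≤ |(N:ℝ)| := by
      rw [← Int.cast_abs]
      exact_mod_cast Int.one_le_abs hN0
    have habsN : |s| = |(N:ℝ)| * (2:ℝ)^fs := by
      rw [hsN, abs_mul, abs_of_pos (zpow_pos (by norm_num : (0:ℝ) < 2) fs)]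
    have hfs_le : (2:ℝ)^fs ≤ |s| := by
      rw [habsN]; nlinarith [zpow_pos (show (0:ℝ) < 2 by norm_num) fs]
    set es : ℤ := Int.log 2 |s| with hes
    have hspos : 0 < |s| := abs_pos.mpr hs0
    have heslo : (2:ℝ)^es ≤ |s| := by
      have := Int.zpow_log_le_self (b := 2) (by norm_num) hspos
      simpa using this
    have heshi : |s| < (2:ℝ)^(es+1) := by
      have := Int.lt_zpow_succ_log_self (b := 2) (by norm_num) |s|
      simpa using this
    have hfs_es : fs ≤ es := by
      have h1 : (2:ℝ)^fs < (2:ℝ)^(es+1) := lt_of_le_of_lt hfs_le heshi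
      have := (zpow_lt_zpow_iff_right₀ (by norm_num : (1:ℝ) < 2)).mp h1
      omega
    have hes_ex : es ≤ ex - 1 := by
      have h1 : (2:ℝ)^es < (2:ℝ)^ex := lt_of_le_of_lt heslo hxyabs
      have := (zpow_lt_zpow_iff_right₀ (by norm_num : (1:ℝ) < 2)).mp h1
      omega
    have hfx_fs : fx + 1 ≤ fs := by rw [hfs]; omega
    have hNlt : |N| < (2:ℤ)^p := by
      have h1 : |(N:ℝ)| * (2:ℝ)^fs < (2:ℝ)^(ex - fs) * (2:ℝ)^fs := by
        rw [← zpow_add₀ (by norm_num : (2:ℝ) ≠ 0), sub_add_cancel, ← habsN]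
        exact hxyabs
      have h2 : |(N:ℝ)| < (2:ℝ)^(ex - fs) :=
        lt_of_mul_lt_mul_right (by linarith) (le_of_lt (zpow_pos (by norm_num) fs))
      have h3 : (2:ℝ)^(ex - fs) ≤ (2:ℝ)^(p:ℤ) := by
        apply zpow_le_zpow_right₀ (by norm_num : (1:ℝ) ≤ 2)
        omega
      have h4 : |(N:ℝ)| < (2:ℝ)^(p:ℤ) := lt_of_lt_of_le h2 h3
      rw [zpow_natCast, ← Int.cast_abs] at h4
      exact_mod_cast h4
    have hrep : FpRep p s := ⟨N, fs, hNlt, hsN⟩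
    exact ⟨Or.inr ⟨N, es, fs, hNo, hsN, heslo, heshi, by omega, hes_ex, hfx_fs, hfs_es⟩, hRs hrep⟩
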